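/- Suppose for each n ∈ ℕ we have Q_n minimizing within 1/n: I(Q_n) + F_{S_n}(Q_n) < inf_{P ∈ C} (I(P) + F_{S_n}(P)) + 1/n, where C is a closed subset of a compact metrizable space on which I is lower semicontinuous with compact sublevel sets, each F_S is continuous, F_S is nondecreasing in S, S_n → ∞, and F = sup_S F_S pointwise (monotone limit). Then liminf_{S→∞} inf_{P ∈ C} (I(P) + F_S(P)) ≥ inf_{P ∈ C} (I(P) + F(P)). -/

import Mathlib

open Filter ENNReal

theorem stmt_16 {X : Type*} [TopologicalSpace X] [CompactSpace X]
    [TopologicalSpace.MetrizableSpace X]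
    (C : Set X) (hC : IsClosed C) (hCne : C.Nonempty)
    (I : X → ℝ≥0∞) (hI : LowerSemicontinuous I)
    (FS : ℝ → X → ℝ≥0∞) (hFScont : ∀ S, Continuous (FS S))
    (hmono : ∀ x, Monotone (fun S => FS S x))
    (F : X → ℝ≥0∞) (hF : ∀ x, F x = ⨆ S : ℝ, FS S x)
    (Sn : ℕ → ℝ) (hSn : Tendsto Sn atTop atTop)
    (Q : ℕ → X) (hQ : ∀ n, Q n ∈ C)
    (hQmin : ∀ n : ℕ, I (Q n) + FS (Sn n) (Q n)
      < (⨅ P ∈ C, I P + FS (Sn n) P) + 1 / n) :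
    (⨅ P ∈ C, I P + F P) ≤ liminf (fun S : ℝ => ⨅ P ∈ C, I P + FS S P) atTop := by
  set g : ℝ → ℝ≥0∞ := fun S => ⨅ P ∈ C, I P + FS S P with hg
  have hgmono : Monotone g := by
    intro S T hST
    exact iInf_mono fun P => iInf_mono fun hP => add_le_add_right (hmono P hST) _
  -- the sup of g is below the liminf
  have hL : (⨆ S : ℝ, g S) ≤ liminf g atTop := by
    refine iSup_le fun S => le_liminf_of_le (by isBoundedDefault) ?_
    filter_upwards [eventually_ge_atTop S] with T hT using hgmono hT
  -- extract a convergent subsequence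
  obtain ⟨x, hxC, φ, hφ, hconv⟩ := (hC.isCompact).tendsto_subseq hQ
  have hφtop : Tendsto φ atTop atTop := hφ.tendsto_atTop
  -- key claim: I x + F x ≤ ⨆ S, g S
  have key : I x + F x ≤ ⨆ S : ℝ, g S := by
    rw [hF, ENNReal.add_iSup]
    refine iSup_le fun S => ?_
    -- lower semicontinuity along the subsequence
    have hlsc : LowerSemicontinuous fun y => I y + FS S y :=
      hI.add (hFScont S).lowerSemicontinuous
    have h1 : I x + FS S x ≤ liminf (fun k => I (Q (φ k)) + FS S (Q (φ k))) atTop := by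
      rw [le_liminf_iff]
      intro y hy
      exact hconv.eventually ((hlsc x) y hy)
    refine h1.trans ?_
    refine ENNReal.le_of_forall_pos_le_add fun ε hε hlt => ?_
    have hev1 : ∀ᶠ k in atTop, S ≤ Sn (φ k) :=
      (hSn.comp hφtop).eventually_ge_atTop S
    have hev2 : ∀ᶠ k in atTop, (1 : ℝ≥0∞) / (φ k : ℕ) ≤ ε := by
      have := (ENNReal.tendsto_inv_nat_nhds_zero.comp hφtop).eventually_le_const
        (show (0:ℝ≥0∞) < ε from ENNReal.coe_pos.2 hε)
      filter_upwards [this] with k hk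
      simpa [one_div] using hk
    have hev : ∀ᶠ k in atTop,
        I (Q (φ k)) + FS S (Q (φ k)) ≤ (⨆ T : ℝ, g T) + ε := by
      filter_upwards [hev1, hev2] with k hk1 hk2
      calc I (Q (φ k)) + FS S (Q (φ k))
          ≤ I (Q (φ k)) + FS (Sn (φ k)) (Q (φ k)) :=
            add_le_add_right (hmono _ hk1) _
        _ ≤ g (Sn (φ k)) + 1 / (φ k : ℕ) := (hQmin (φ k)).le
        _ ≤ (⨆ T : ℝ, g T) + ε := add_le_add (le_iSup g _) hk2
    exact (liminf_le_of_frequently_le hev.frequently (by isBoundedDefault))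
  calc (⨅ P ∈ C, I P + F P) ≤ I x + F x := biInf_le _ hxC
    _ ≤ ⨆ S : ℝ, g S := key
    _ ≤ liminf g atTop := hL
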